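/- Let a_0,…,a_{n+2}, b_0,…,b_n be real with b_k distinct mod π; set A = Σ_{k=0}^{n+2} a_k, B = Σ_{k=0}^{n} b_k. Then 4 Σ_{k=0}^{n} [∏_{t=0}^{n+2} sin(b_k − a_t)] / ∏_{j≠k} sin(b_k−b_j) = Σ_{k=0}^{n+2} sin(B − A + 2a_k) − Σ_{k=0}^{n} sin(B − A + 2b_k). -/

import Mathlib

open Finset

section Aux
open Polynomial Lagrange
variable {F : Type*} [Field F] {ι : Type*} [DecidableEq ι]

theorem lag_coeff (s : Finset ι) (v : ι → F) (hvs : Set.InjOn v s) (g : F[X])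
    (hg : g.degree < s.card) :
    ∑ i ∈ s, nodalWeight s v i * g.eval (v i) = g.coeff (s.card - 1) := by
  have h := Lagrange.eq_interpolate hvs hg
  conv_rhs => rw [h, interpolate_eq_nodalWeight_mul_nodal_div_X_sub_C]
  rw [finset_sum_coeff]
  refine (Finset.sum_congr rfl fun i hi => ?_).symm
  rw [← nodal_erase_eq_nodal_div hi]
  have hmon : (nodal (s.erase i) v).Monic := nodal_monic
  have hdeg : (nodal (s.erase i) v).natDegree = s.card - 1 := by
    rw [natDegree_nodal, card_erase_of_mem hi]
  have : C (nodalWeight s v i) * nodal (s.erase i) v * C (g.eval (v i))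
      = C (nodalWeight s v i * g.eval (v i)) * nodal (s.erase i) v := by
    rw [C_mul]; ring
  rw [this, coeff_C_mul, ← hdeg, hmon.coeff_natDegree, mul_one]

theorem lag_inv (s : Finset ι) (v : ι → F) (hvs : Set.InjOn v s)
    (h0 : ∀ i ∈ s, v i ≠ 0) (g : F[X]) (hg : g.degree < s.card) :
    ∑ i ∈ s, nodalWeight s v i * (v i)⁻¹ * g.eval (v i)
      = -((-1) ^ s.card * g.eval 0 / ∏ i ∈ s, v i) := by
  have h := Lagrange.eq_interpolate hvs hg
  have h2 := Lagrange.eval_interpolate_not_at_node (x := (0:F)) (s := s) (v := v)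
    (fun i => g.eval (v i)) (fun i hi => (h0 i hi).symm)
  rw [← h] at h2
  have hnodal : eval (0:F) (nodal s v) = (-1) ^ s.card * ∏ i ∈ s, v i := by
    rw [eval_nodal]
    rw [show (∏ i ∈ s, ((0:F) - v i)) = ∏ i ∈ s, (-1) * v i from
      Finset.prod_congr rfl fun i _ => by ring]
    rw [Finset.prod_mul_distrib, Finset.prod_const]
  have hsum : (∑ i ∈ s, nodalWeight s v i * ((0:F) - v i)⁻¹ * g.eval (v i))
      = -∑ i ∈ s, nodalWeight s v i * (v i)⁻¹ * g.eval (v i) := by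
    rw [← Finset.sum_neg_distrib]
    refine Finset.sum_congr rfl fun i _ => by rw [zero_sub, inv_neg]; ring
  rw [hnodal, hsum] at h2
  have hprod : (∏ i ∈ s, v i) ≠ 0 := Finset.prod_ne_zero_iff.mpr h0
  have hc : ((-1:F) ^ s.card) * ((-1) ^ s.card) = 1 := by
    rw [← pow_add, ← two_mul, pow_mul, neg_one_sq, one_pow]
  rw [← neg_div, eq_div_iff hprod]
  linear_combination ((-1:F) ^ s.card) * h2 - ((∑ i ∈ s, nodalWeight s v i * (v i)⁻¹ * g.eval (v i)) * ∏ i ∈ s, v i) * hc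

theorem core_identity (n : ℕ) (x : Fin (n+1) → F) (y : Fin (n+3) → F)
    (hinj : Function.Injective x) (hx0 : ∀ k, x k ≠ 0) (hy0 : ∀ t, y t ≠ 0) :
    ∑ k, (∏ t, (x k - y t)) / (x k ^ 2 * ∏ j ∈ univ.erase k, (x k - x j))
      = (∑ j, x j) - (∑ t, y t)
        + (∏ t, y t) / (∏ j, x j) * ((∑ t, (y t)⁻¹) - ∑ j, (x j)⁻¹) := by
  classical
  have hvs : Set.InjOn x (univ : Finset (Fin (n+1))) := Function.Injective.injOn hinj
  have hcard : (univ : Finset (Fin (n+1))).card = n + 1 := by simp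
  have hcardy : (univ : Finset (Fin (n+3))).card = n + 3 := by simp
  set P : F[X] := nodal univ y with hP
  set Q : F[X] := nodal univ x with hQ
  have hPmon : P.Monic := nodal_monic
  have hQmon : Q.Monic := nodal_monic
  have hPdeg : P.natDegree = n + 3 := by rw [hP, natDegree_nodal, hcardy]
  have hQdeg : Q.natDegree = n + 1 := by rw [hQ, natDegree_nodal, hcard]
  set S : F[X] := P /ₘ X ^ 2 with hS
  set c0 : F := P.coeff 0 with hc0
  set c1 : F := P.coeff 1 with hc1
  have hmonX2 : (X ^ 2 : F[X]).Monic := monic_X_pow 2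
  have hdecomp : P %ₘ X ^ 2 + X ^ 2 * S = P := modByMonic_add_div P (X ^ 2)
  have hRdeg : (P %ₘ X ^ 2).degree < 2 := by
    simpa [degree_X_pow] using degree_modByMonic_lt P hmonX2
  -- coefficient shift
  have hcoeffS : ∀ m : ℕ, S.coeff m = P.coeff (m + 2) := by
    intro m
    have h1 : P.coeff (m + 2) = (P %ₘ X ^ 2).coeff (m + 2) + (X ^ 2 * S).coeff (m + 2) := by
      rw [← coeff_add, hdecomp]
    have h2 : (P %ₘ X ^ 2).coeff (m + 2) = 0 :=
      coeff_eq_zero_of_degree_lt (lt_of_lt_of_le hRdeg (by exact_mod_cast by omega))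
    rw [h1, h2, zero_add, coeff_X_pow_mul]
  -- eval decomposition
  have hReq : P %ₘ X ^ 2 = C c1 * X + C c0 := by
    have hle : (P %ₘ X ^ 2).degree ≤ 1 := by
      rw [degree_le_iff_coeff_zero]
      intro m hm
      refine coeff_eq_zero_of_degree_lt (lt_of_lt_of_le hRdeg ?_)
      have : (2:ℕ) ≤ m := by exact_mod_cast (by exact_mod_cast hm : (1: WithBot ℕ) < m)
      exact_mod_cast Nat.cast_le.mpr this
    have := eq_X_add_C_of_degree_le_one hle
    have e0 : (P %ₘ X ^ 2).coeff 0 = c0 := by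
      have h1 : P.coeff 0 = (P %ₘ X ^ 2).coeff 0 + (X ^ 2 * S).coeff 0 := by
        rw [← coeff_add, hdecomp]
      rw [hc0, h1, X_pow_mul, coeff_mul_X_pow']
      norm_num
    have e1 : (P %ₘ X ^ 2).coeff 1 = c1 := by
      have h1 : P.coeff 1 = (P %ₘ X ^ 2).coeff 1 + (X ^ 2 * S).coeff 1 := by
        rw [← coeff_add, hdecomp]
      rw [hc1, h1, X_pow_mul, coeff_mul_X_pow']
      norm_num
    rw [this, e0, e1]
  have hPeval : ∀ z : F, P.eval z = c0 + c1 * z + z ^ 2 * S.eval z := by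
    intro z
    conv_lhs => rw [← hdecomp]
    rw [hReq]
    simp [eval_add, eval_mul, eval_pow]
    ring
  -- degree of S - Q
  have hPc3 : P.coeff (n + 3) = 1 := by
    have := hPmon.coeff_natDegree; rwa [hPdeg] at this
  have hQc1' : Q.coeff (n + 1) = 1 := by
    have := hQmon.coeff_natDegree; rwa [hQdeg] at this
  have hSQdeg : (S - Q).degree < ((n + 1 : ℕ) : WithBot ℕ) := by
    rw [degree_lt_iff_coeff_zero]
    intro m hm
    have hm' : n + 1 ≤ m := by exact_mod_cast hm
    rw [coeff_sub, hcoeffS]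
    rcases eq_or_lt_of_le hm' with h | h
    · rw [← h]
      rw [show n + 1 + 2 = n + 3 from rfl, hPc3, hQc1', sub_self]
    · have h1 : P.coeff (m + 2) = 0 := by
        apply coeff_eq_zero_of_natDegree_lt; omega
      have h2 : Q.coeff m = 0 := by
        apply coeff_eq_zero_of_natDegree_lt; omega
      rw [h1, h2, sub_self]
  -- Sum 1
  have hE1 : ∑ k, nodalWeight univ x k * S.eval (x k) = (∑ j, x j) - (∑ t, y t) := by
    have h1 : ∀ k, S.eval (x k) = (S - Q).eval (x k) := fun k => by
      rw [eval_sub, hQ, eval_nodal_at_node (mem_univ k), sub_zero]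
    calc ∑ k, nodalWeight univ x k * S.eval (x k)
        = ∑ k, nodalWeight univ x k * (S - Q).eval (x k) :=
          Finset.sum_congr rfl fun k _ => by rw [h1]
      _ = (S - Q).coeff ((univ : Finset (Fin (n+1))).card - 1) := by
          apply lag_coeff univ x hvs
          rw [hcard]; exact hSQdeg
      _ = (∑ j, x j) - (∑ t, y t) := by
          rw [hcard, coeff_sub, hcoeffS]
          have hy : P.coeff (n + 1 - 1 + 2) = -∑ t, y t := by
            have := prod_X_sub_C_coeff_card_pred (univ : Finset (Fin (n+3))) y (by simp)
            rw [hcardy] at this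
            rw [hP, nodal_eq, show n + 1 - 1 + 2 = n + 3 - 1 from by omega]
            exact this
          have hx : Q.coeff (n + 1 - 1) = -∑ j, x j := by
            have := prod_X_sub_C_coeff_card_pred (univ : Finset (Fin (n+1))) x (by simp)
            rw [hcard] at this
            rw [hQ, nodal_eq]
            exact this
          rw [hy, hx]; ring
  -- products over erase
  have hprodx : (∏ j, x j) ≠ 0 := Finset.prod_ne_zero_iff.mpr fun i _ => hx0 i
  have hprody : (∏ t, y t) ≠ 0 := Finset.prod_ne_zero_iff.mpr fun i _ => hy0 i
  have herasex : ∀ k, ∏ j ∈ univ.erase k, x j = (∏ j, x j) * (x k)⁻¹ := by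
    intro k
    rw [eq_comm, ← div_eq_mul_inv, div_eq_iff (hx0 k), mul_comm]
    exact (Finset.mul_prod_erase univ x (mem_univ k)).symm
  have herasey : ∀ t, ∏ l ∈ univ.erase t, y l = (∏ l, y l) * (y t)⁻¹ := by
    intro t
    rw [eq_comm, ← div_eq_mul_inv, div_eq_iff (hy0 t), mul_comm]
    exact (Finset.mul_prod_erase univ y (mem_univ t)).symm
  -- coeff-1 via derivative
  have hder : ∀ (m : ℕ) (v : Fin m → F), (nodal univ v).coeff 1
      = ∑ k, ∏ j ∈ univ.erase k, (0 - v j) := by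
    intro m v
    have h1 : (nodal univ v).coeff 1 = (derivative (nodal univ v)).coeff 0 := by
      rw [coeff_derivative]; push_cast; ring
    rw [h1, coeff_zero_eq_eval_zero, derivative_nodal, eval_finset_sum]
    exact Finset.sum_congr rfl fun k _ => by rw [eval_nodal]
  have hQc1 : Q.coeff 1 = (-1) ^ n * ((∏ j, x j) * ∑ j, (x j)⁻¹) := by
    rw [hQ, hder]
    have : ∀ k : Fin (n+1), ∏ j ∈ univ.erase k, (0 - x j)
        = (-1) ^ n * ((∏ j, x j) * (x k)⁻¹) := by
      intro k
      rw [show (fun j => (0:F) - x j) = fun j => (-1) * x j from funext fun j => by ring]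
      rw [Finset.prod_mul_distrib, Finset.prod_const, card_erase_of_mem (mem_univ k), hcard,
        herasex k]
      norm_num
    rw [Finset.sum_congr rfl fun k _ => this k, ← Finset.mul_sum, ← Finset.mul_sum]
  have hPc1v : c1 = (-1) ^ (n + 2) * ((∏ t, y t) * ∑ t, (y t)⁻¹) := by
    rw [hc1, hP, hder]
    have : ∀ t : Fin (n+3), ∏ l ∈ univ.erase t, (0 - y l)
        = (-1) ^ (n + 2) * ((∏ l, y l) * (y t)⁻¹) := by
      intro t
      rw [show (fun l => (0:F) - y l) = fun l => (-1) * y l from funext fun l => by ring]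
      rw [Finset.prod_mul_distrib, Finset.prod_const, card_erase_of_mem (mem_univ t), hcardy,
        herasey t]
      norm_num
    rw [Finset.sum_congr rfl fun t _ => this t, ← Finset.mul_sum, ← Finset.mul_sum]
  have heval0 : ∀ (m : ℕ) (v : Fin m → F), eval (0:F) (nodal univ v) = (-1) ^ m * ∏ j, v j := by
    intro m v
    rw [eval_nodal]
    rw [show (fun j => (0:F) - v j) = fun j => (-1) * v j from funext fun j => by ring]
    rw [Finset.prod_mul_distrib, Finset.prod_const, card_univ, Fintype.card_fin]
  have hc0v : c0 = (-1) ^ (n + 3) * ∏ t, y t := by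
    rw [hc0, coeff_zero_eq_eval_zero, hP, heval0]
  have hQ0 : Q.eval 0 = (-1) ^ (n + 1) * ∏ j, x j := by rw [hQ, heval0]
  -- E2
  have hE2 : ∑ k, nodalWeight univ x k * (x k)⁻¹ = -((-1) ^ (n + 1) / ∏ j, x j) := by
    have h := lag_inv univ x hvs (fun i _ => hx0 i) 1 (by
      rw [degree_one, hcard]; exact_mod_cast Nat.succ_pos n)
    simpa [hcard] using h
  -- E3
  have hQne : Q ≠ 0 := nodal_ne_zero
  have hτ : ((-1:F) ^ n) * ((-1) ^ n) = 1 := by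
    rw [← pow_add, ← two_mul, pow_mul, neg_one_sq, one_pow]
  have hQX2 : C (Q.eval 0) + X * (Q /ₘ X) = Q := by
    have h := modByMonic_add_div Q X
    rwa [modByMonic_X] at h
  have hg1eval : ∀ k, (Q /ₘ X).eval (x k) = -(Q.eval 0) * (x k)⁻¹ := by
    intro k
    have h := congrArg (eval (x k)) hQX2
    simp only [eval_add, eval_mul, eval_C, eval_X] at h
    rw [hQ, eval_nodal_at_node (mem_univ k)] at h
    field_simp [hx0 k]
    linear_combination h
  have hg10 : (Q /ₘ X).eval 0 = Q.coeff 1 := by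
    have h := congrArg (fun p : F[X] => p.coeff 1) hQX2
    simp only [coeff_add, coeff_C, coeff_X_mul, if_neg one_ne_zero, zero_add] at h
    rw [← coeff_zero_eq_eval_zero, h]
  have hg1deg : (Q /ₘ X).degree < ((n + 1 : ℕ) : WithBot ℕ) := by
    have h := degree_divByMonic_lt Q X hQne (by rw [degree_X]; exact zero_lt_one)
    rwa [hQ, degree_nodal, hcard] at h
  have h3 := lag_inv univ x hvs (fun i _ => hx0 i) (Q /ₘ X) (by rw [hcard]; exact hg1deg)
  have h4 : ∑ k, nodalWeight univ x k * (x k)⁻¹ * eval (x k) (Q /ₘ X)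
      = -(Q.eval 0) * ∑ k, nodalWeight univ x k * (x k)⁻¹ * (x k)⁻¹ := by
    rw [Finset.mul_sum]
    exact Finset.sum_congr rfl fun k _ => by rw [hg1eval k]; ring
  rw [h4, hcard, hg10, hQc1, hQ0] at h3
  rw [show ((-1:F) ^ (n+1) * ((-1) ^ n * ((∏ j, x j) * ∑ j, (x j)⁻¹)))
      = ((-1) ^ (n+1) * (-1) ^ n * ∑ j, (x j)⁻¹) * ∏ j, x j from by ring,
    mul_div_cancel_right₀ _ hprodx] at h3
  have p1 : (-1:F) ^ (n+1) = -(-1:F) ^ n := by rw [pow_succ]; ring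
  have p2 : (-1:F) ^ (n+2) = (-1:F) ^ n := by rw [pow_succ, pow_succ]; ring
  have p3 : (-1:F) ^ (n+3) = -(-1:F) ^ n := by rw [pow_succ, pow_succ, pow_succ]; ring
  rw [p1] at h3 hE2
  rw [p2] at hPc1v
  rw [p3] at hc0v
  set τ : F := (-1:F) ^ n with hτdef
  have hE3m : (∑ k, nodalWeight univ x k * (x k)⁻¹ * (x k)⁻¹) * ∏ j, x j
      = τ * ∑ j, (x j)⁻¹ := by
    linear_combination τ * h3 +
      ((τ * ∑ j, (x j)⁻¹) - (∑ k, nodalWeight univ x k * (x k)⁻¹ * (x k)⁻¹) * ∏ j, x j) * hτ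
  -- per-term decomposition
  have hD : ∀ k, (∏ j ∈ univ.erase k, (x k - x j)) ≠ 0 := by
    intro k
    refine Finset.prod_ne_zero_iff.mpr fun j hj => sub_ne_zero_of_ne fun h => ?_
    exact (Finset.mem_erase.mp hj).1 (hinj h.symm)
  have hwdef : ∀ k, nodalWeight univ x k = (∏ j ∈ univ.erase k, (x k - x j))⁻¹ := by
    intro k
    rw [nodalWeight, ← Finset.prod_inv_distrib]
  have hterm : ∀ k, (∏ t, (x k - y t)) / (x k ^ 2 * ∏ j ∈ univ.erase k, (x k - x j))
      = nodalWeight univ x k * S.eval (x k)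
        + c1 * (nodalWeight univ x k * (x k)⁻¹)
        + c0 * (nodalWeight univ x k * (x k)⁻¹ * (x k)⁻¹) := by
    intro k
    have h1 : ∏ t, (x k - y t) = P.eval (x k) := by rw [hP, eval_nodal]
    rw [h1, hPeval, hwdef k]
    field_simp [hx0 k, hD k]
    ring
  have hu : (∏ j, x j)⁻¹ * ∏ j, x j = 1 := inv_mul_cancel₀ hprodx
  rw [Finset.sum_congr rfl fun k _ => hterm k, Finset.sum_add_distrib, Finset.sum_add_distrib,
    ← Finset.mul_sum, ← Finset.mul_sum, hE1, hE2, hPc1v, hc0v]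
  simp only [div_eq_mul_inv]
  linear_combination
    ((-τ) * (∏ t, y t) * (∏ j, x j)⁻¹) * hE3m
    + (τ * (∏ t, y t) * (∑ k, nodalWeight univ x k * (x k)⁻¹ * (x k)⁻¹)) * hu
    + ((∏ t, y t) * (∑ t, (y t)⁻¹) * (∏ j, x j)⁻¹
        - (∏ t, y t) * (∑ j, (x j)⁻¹) * (∏ j, x j)⁻¹) * hτ
end Aux

section Aux2
open Complex
lemma key1 (u v : ℂ) : Complex.exp (2*u*I) - Complex.exp (2*v*I)
    = 2*I*Complex.sin (u - v) * Complex.exp ((u+v)*I) := by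
  have e1 : Complex.exp (2*u*I) = Complex.exp ((u-v)*I) * Complex.exp ((u+v)*I) := by
    rw [← Complex.exp_add]; congr 1; ring
  have e2 : Complex.exp (2*v*I) = Complex.exp (-(u-v)*I) * Complex.exp ((u+v)*I) := by
    rw [← Complex.exp_add]; congr 1; ring
  rw [e1, e2, Complex.sin]
  linear_combination ((Complex.exp ((u-v)*I) - Complex.exp (-(u-v)*I))
    * Complex.exp ((u+v)*I)) * Complex.I_sq

lemma key2 (w : ℂ) : I/2 * (Complex.exp (w*I) - Complex.exp (-(w*I))) = -Complex.sin w := by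
  rw [Complex.sin]; ring

theorem sine_sum_identity_kappa2 (n : ℕ) (a : Fin (n + 3) → ℝ) (b : Fin (n + 1) → ℝ)
    (hb : ∀ j k, j ≠ k → Real.sin (b j - b k) ≠ 0)
    (A B : ℝ) (hA : A = ∑ k, a k) (hB : B = ∑ k, b k) :
    4 * ∑ k, (∏ t, Real.sin (b k - a t)) / ∏ j ∈ univ.erase k, Real.sin (b k - b j)
      = (∑ k, Real.sin (B - A + 2 * a k)) - ∑ k, Real.sin (B - A + 2 * b k) := by
  have hA' : (A:ℂ) = ∑ k, (a k : ℂ) := by rw [hA]; push_cast; rfl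
  have hB' : (B:ℂ) = ∑ k, (b k : ℂ) := by rw [hB]; push_cast; rfl
  set x : Fin (n+1) → ℂ := fun k => Complex.exp (2 * (b k : ℂ) * I) with hxdef
  set y : Fin (n+3) → ℂ := fun t => Complex.exp (2 * (a t : ℂ) * I) with hydef
  have hx0 : ∀ k, x k ≠ 0 := fun k => Complex.exp_ne_zero _
  have hy0 : ∀ t, y t ≠ 0 := fun t => Complex.exp_ne_zero _
  have hbC : ∀ j k : Fin (n+1), j ≠ k → Complex.sin ((b j : ℂ) - (b k : ℂ)) ≠ 0 := by
    intro j k hjk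
    have h : ((Real.sin (b j - b k) : ℝ) : ℂ) ≠ 0 := by exact_mod_cast hb j k hjk
    rwa [Complex.ofReal_sin, Complex.ofReal_sub] at h
  have hxx : ∀ j k : Fin (n+1), x j - x k
      = 2*I*Complex.sin ((b j:ℂ) - (b k:ℂ)) * Complex.exp (((b j:ℂ) + (b k:ℂ))*I) :=
    fun j k => key1 _ _
  have hxy : ∀ (k : Fin (n+1)) (t : Fin (n+3)), x k - y t
      = 2*I*Complex.sin ((b k:ℂ) - (a t:ℂ)) * Complex.exp (((b k:ℂ) + (a t:ℂ))*I) :=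
    fun k t => key1 _ _
  have hinj : Function.Injective x := by
    intro j k h
    by_contra hjk
    have hne : x j - x k ≠ 0 := by
      rw [hxx j k]
      exact mul_ne_zero (mul_ne_zero (mul_ne_zero two_ne_zero Complex.I_ne_zero)
        (hbC j k hjk)) (Complex.exp_ne_zero _)
    exact hne (sub_eq_zero.mpr h)
  have hcore := core_identity n x y hinj hx0 hy0
  have h2I : (2*I : ℂ) ≠ 0 := mul_ne_zero two_ne_zero Complex.I_ne_zero
  -- product formulas
  have hprodA : ∀ k : Fin (n+1), ∏ t, (x k - y t)
      = (2*I)^(n+3) * (∏ t, Complex.sin ((b k:ℂ) - (a t:ℂ)))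
        * Complex.exp (((((n:ℂ))+3) * (b k:ℂ) + (A:ℂ)) * I) := by
    intro k
    rw [Finset.prod_congr rfl fun t _ => hxy k t, Finset.prod_mul_distrib,
      Finset.prod_mul_distrib, Finset.prod_const, ← Complex.exp_sum, card_univ,
      Fintype.card_fin]
    congr 2
    rw [← Finset.sum_mul]
    congr 1
    rw [Finset.sum_add_distrib, Finset.sum_const, card_univ, Fintype.card_fin, hA']
    push_cast
    ring
  have hprodB : ∀ k : Fin (n+1), ∏ j ∈ univ.erase k, (x k - x j)
      = (2*I)^n * (∏ j ∈ univ.erase k, Complex.sin ((b k:ℂ) - (b j:ℂ)))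
        * Complex.exp ((((n:ℂ)) * (b k:ℂ) + ((B:ℂ) - (b k:ℂ))) * I) := by
    intro k
    rw [Finset.prod_congr rfl fun j _ => hxx k j, Finset.prod_mul_distrib,
      Finset.prod_mul_distrib, Finset.prod_const, ← Complex.exp_sum,
      card_erase_of_mem (mem_univ k), card_univ, Fintype.card_fin]
    congr 2
    rw [← Finset.sum_mul]
    congr 1
    rw [Finset.sum_add_distrib, Finset.sum_const, card_erase_of_mem (mem_univ k), card_univ,
      Fintype.card_fin]
    have hsb : ∑ j ∈ univ.erase k, (b j : ℂ) = (B:ℂ) - (b k:ℂ) := by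
      rw [hB']
      rw [← Finset.sum_erase_add univ _ (mem_univ k)]
      push_cast
      ring
    rw [hsb]
    push_cast
    simp [Nat.add_sub_cancel]
  have h2I3 : ((2*I)^3 : ℂ) = -8*I := by
    rw [show ((2*I)^3 : ℂ) = 8*(I^2*I) from by ring, Complex.I_sq]; ring
  have hscal : ∀ k : Fin (n+1),
      I/8 * Complex.exp (((B:ℂ)-(A:ℂ))*I)
        * ((2*I)^(n+3) * Complex.exp (((((n:ℂ))+3) * (b k:ℂ) + (A:ℂ)) * I))
      = x k^2 * ((2*I)^n * Complex.exp ((((n:ℂ)) * (b k:ℂ) + ((B:ℂ) - (b k:ℂ))) * I)) := by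
    intro k
    have e1 : Complex.exp (((B:ℂ)-(A:ℂ))*I) * Complex.exp (((((n:ℂ))+3) * (b k:ℂ) + (A:ℂ)) * I)
        = Complex.exp (((((n:ℂ))+4) * (b k:ℂ) + ((B:ℂ) - (b k:ℂ))) * I) := by
      rw [← Complex.exp_add]; congr 1; ring
    have e2 : x k^2 * Complex.exp ((((n:ℂ)) * (b k:ℂ) + ((B:ℂ) - (b k:ℂ))) * I)
        = Complex.exp (((((n:ℂ))+4) * (b k:ℂ) + ((B:ℂ) - (b k:ℂ))) * I) := by
      simp only [hxdef]
      rw [sq, mul_assoc, ← Complex.exp_add, ← Complex.exp_add]; congr 1; ring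
    rw [pow_add ((2:ℂ)*I) n 3, h2I3]
    calc I/8 * Complex.exp (((B:ℂ)-(A:ℂ))*I)
        * ((2*I)^n * (-8*I) * Complex.exp (((((n:ℂ))+3) * (b k:ℂ) + (A:ℂ)) * I))
        = (-I^2) * (2*I)^n * (Complex.exp (((B:ℂ)-(A:ℂ))*I)
            * Complex.exp (((((n:ℂ))+3) * (b k:ℂ) + (A:ℂ)) * I)) := by ring
      _ = (2*I)^n * Complex.exp (((((n:ℂ))+4) * (b k:ℂ) + ((B:ℂ) - (b k:ℂ))) * I) := by
          rw [e1, Complex.I_sq]; ring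
      _ = x k^2 * ((2*I)^n * Complex.exp ((((n:ℂ)) * (b k:ℂ) + ((B:ℂ) - (b k:ℂ))) * I)) := by
          rw [← e2]; ring
  have hPBne : ∀ k : Fin (n+1), (∏ j ∈ univ.erase k, Complex.sin ((b k:ℂ) - (b j:ℂ))) ≠ 0 := by
    intro k
    exact Finset.prod_ne_zero_iff.mpr fun j hj => hbC k j fun h => (mem_erase.mp hj).1 h.symm
  have hratio : ∀ k : Fin (n+1),
      ((((∏ t, Real.sin (b k - a t)) / ∏ j ∈ univ.erase k, Real.sin (b k - b j)) : ℝ) : ℂ)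
      = I/8 * Complex.exp (((B:ℂ)-(A:ℂ))*I)
        * ((∏ t, (x k - y t)) / (x k^2 * ∏ j ∈ univ.erase k, (x k - x j))) := by
    intro k
    have hcast : ((((∏ t, Real.sin (b k - a t)) / ∏ j ∈ univ.erase k, Real.sin (b k - b j)) : ℝ) : ℂ)
        = (∏ t, Complex.sin ((b k:ℂ) - (a t:ℂ))) / ∏ j ∈ univ.erase k, Complex.sin ((b k:ℂ) - (b j:ℂ)) := by
      push_cast
      rfl
    rw [hcast, hprodA k, hprodB k]
    rw [← mul_div_assoc]
    rw [div_eq_div_iff (hPBne k) (by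
      exact mul_ne_zero (pow_ne_zero 2 (hx0 k)) (mul_ne_zero (mul_ne_zero (pow_ne_zero n h2I)
        (hPBne k)) (Complex.exp_ne_zero _)))]
    calc (∏ t, Complex.sin ((b k:ℂ) - (a t:ℂ)))
          * (x k^2 * ((2*I)^n * (∏ j ∈ univ.erase k, Complex.sin ((b k:ℂ) - (b j:ℂ)))
            * Complex.exp ((((n:ℂ)) * (b k:ℂ) + ((B:ℂ) - (b k:ℂ))) * I)))
        = ((∏ t, Complex.sin ((b k:ℂ) - (a t:ℂ)))
            * (∏ j ∈ univ.erase k, Complex.sin ((b k:ℂ) - (b j:ℂ))))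
          * (x k^2 * ((2*I)^n
            * Complex.exp ((((n:ℂ)) * (b k:ℂ) + ((B:ℂ) - (b k:ℂ))) * I))) := by ring
      _ = ((∏ t, Complex.sin ((b k:ℂ) - (a t:ℂ)))
            * (∏ j ∈ univ.erase k, Complex.sin ((b k:ℂ) - (b j:ℂ))))
          * (I/8 * Complex.exp (((B:ℂ)-(A:ℂ))*I)
            * ((2*I)^(n+3) * Complex.exp (((((n:ℂ))+3) * (b k:ℂ) + (A:ℂ)) * I))) := by
          rw [hscal k]
      _ = I/8 * Complex.exp (((B:ℂ)-(A:ℂ))*I)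
          * ((2*I)^(n+3) * (∏ t, Complex.sin ((b k:ℂ) - (a t:ℂ)))
            * Complex.exp (((((n:ℂ))+3) * (b k:ℂ) + (A:ℂ)) * I))
          * ∏ j ∈ univ.erase k, Complex.sin ((b k:ℂ) - (b j:ℂ)) := by ring
  have hLHS : ((4 * ∑ k, (∏ t, Real.sin (b k - a t)) / ∏ j ∈ univ.erase k, Real.sin (b k - b j) : ℝ) : ℂ)
      = I/2 * Complex.exp (((B:ℂ)-(A:ℂ))*I)
        * ∑ k, (∏ t, (x k - y t)) / (x k^2 * ∏ j ∈ univ.erase k, (x k - x j)) := by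
    rw [Complex.ofReal_mul, Complex.ofReal_sum]
    rw [Finset.sum_congr rfl fun k _ => hratio k]
    rw [← Finset.mul_sum]
    push_cast
    ring
  have hPx : ∏ j, x j = Complex.exp (2*(B:ℂ)*I) := by
    simp only [hxdef]
    rw [← Complex.exp_sum]
    congr 1
    rw [hB', Finset.mul_sum, Finset.sum_mul]
  have hPy : ∏ t, y t = Complex.exp (2*(A:ℂ)*I) := by
    simp only [hydef]
    rw [← Complex.exp_sum]
    congr 1
    rw [hA', Finset.mul_sum, Finset.sum_mul]
  have hterm2 : ∀ θ : ℝ, I/2 * Complex.exp (((B:ℂ)-(A:ℂ))*I)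
      * (Complex.exp (2*(θ:ℂ)*I) - Complex.exp (2*(A:ℂ)*I - 2*(B:ℂ)*I) * Complex.exp (-(2*(θ:ℂ)*I)))
      = -Complex.sin ((B:ℂ) - (A:ℂ) + 2*(θ:ℂ)) := by
    intro θ
    have e1 : Complex.exp (((B:ℂ)-(A:ℂ))*I) * Complex.exp (2*(θ:ℂ)*I)
        = Complex.exp (((B:ℂ)-(A:ℂ)+2*(θ:ℂ))*I) := by
      rw [← Complex.exp_add]; congr 1; ring
    have e2 : Complex.exp (((B:ℂ)-(A:ℂ))*I)
        * (Complex.exp (2*(A:ℂ)*I - 2*(B:ℂ)*I) * Complex.exp (-(2*(θ:ℂ)*I)))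
        = Complex.exp (-(((B:ℂ)-(A:ℂ)+2*(θ:ℂ))*I)) := by
      rw [← Complex.exp_add, ← Complex.exp_add]; congr 1; ring
    linear_combination key2 ((B:ℂ) - (A:ℂ) + 2*(θ:ℂ)) + I/2 * e1 - I/2 * e2
  have hpush : ∀ (m : ℕ) (c K : ℂ) (u v : Fin m → ℂ),
      c * ((∑ i, u i) - K * ∑ i, v i) = ∑ i, c * (u i - K * v i) := by
    intro m c K u v
    rw [mul_sub, ← mul_assoc, Finset.mul_sum, Finset.mul_sum, ← Finset.sum_sub_distrib]
    exact Finset.sum_congr rfl fun i _ => by ring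
  have hRHS : I/2 * Complex.exp (((B:ℂ)-(A:ℂ))*I)
      * ((∑ j, x j) - (∑ t, y t) + (∏ t, y t)/(∏ j, x j) * ((∑ t, (y t)⁻¹) - ∑ j, (x j)⁻¹))
      = (((∑ k, Real.sin (B - A + 2 * a k)) - ∑ k, Real.sin (B - A + 2 * b k) : ℝ) : ℂ) := by
    rw [hPx, hPy, ← Complex.exp_sub]
    have hxinv : ∀ j : Fin (n+1), (x j)⁻¹ = Complex.exp (-(2*(b j:ℂ)*I)) := by
      intro j; simp only [hxdef]; rw [Complex.exp_neg]
    have hyinv : ∀ t : Fin (n+3), (y t)⁻¹ = Complex.exp (-(2*(a t:ℂ)*I)) := by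
      intro t; simp only [hydef]; rw [Complex.exp_neg]
    simp only [Finset.sum_congr rfl fun j (_ : j ∈ univ) => hxinv j,
      Finset.sum_congr rfl fun t (_ : t ∈ univ) => hyinv t]
    simp only [hxdef, hydef]
    rw [show (∑ j : Fin (n+1), Complex.exp (2*(b j:ℂ)*I)) - (∑ t : Fin (n+3), Complex.exp (2*(a t:ℂ)*I))
        + Complex.exp (2*(A:ℂ)*I - 2*(B:ℂ)*I)
          * ((∑ t : Fin (n+3), Complex.exp (-(2*(a t:ℂ)*I))) - ∑ j : Fin (n+1), Complex.exp (-(2*(b j:ℂ)*I)))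
        = ((∑ j : Fin (n+1), Complex.exp (2*(b j:ℂ)*I))
            - Complex.exp (2*(A:ℂ)*I - 2*(B:ℂ)*I) * ∑ j : Fin (n+1), Complex.exp (-(2*(b j:ℂ)*I)))
          - ((∑ t : Fin (n+3), Complex.exp (2*(a t:ℂ)*I))
            - Complex.exp (2*(A:ℂ)*I - 2*(B:ℂ)*I) * ∑ t : Fin (n+3), Complex.exp (-(2*(a t:ℂ)*I)))
        from by ring]
    rw [mul_sub, hpush, hpush]
    rw [Finset.sum_congr rfl fun j (_ : j ∈ univ) => hterm2 (b j),
      Finset.sum_congr rfl fun t (_ : t ∈ univ) => hterm2 (a t)]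
    push_cast
    rw [Finset.sum_neg_distrib, Finset.sum_neg_distrib]
    ring
  have hfinal : ((4 * ∑ k, (∏ t, Real.sin (b k - a t)) / ∏ j ∈ univ.erase k, Real.sin (b k - b j) : ℝ) : ℂ)
      = (((∑ k, Real.sin (B - A + 2 * a k)) - ∑ k, Real.sin (B - A + 2 * b k) : ℝ) : ℂ) := by
    rw [hLHS, hcore, hRHS]
  exact_mod_cast hfinal
end Aux2
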